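/- Let r ≥ 1, let L₁, …, L_r be finite sets of colors, each of size r + 300, let C be a finite set of colors disjoint from each L_j, fix an index i with 1 ≤ i ≤ r, and fix a finite set T of colors. Then the number of injective functions f from {1, …, r} to the colors with f(j) ∈ L_j for every j and with C ∪ {f(1), …, f(r)} = T ∪ {f(i)} is at most (r+300)·(r−1)!. -/

import Mathlib

/-- Let `L 0, …, L (r-1)` (`r ≥ 1`) be lists of colors, each of
size `r + 300`, let `C` be a finite set of colors disjoint from every `L j`, fix an
index `i` and a finite set `T` of colors.  Then the number of injective choice
functions `f` (injective, `f j ∈ L j` for all `j`) satisfying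
`C ∪ {f 0, …, f (r-1)} = T ∪ {f i}` is at most `(r+300)·(r-1)!`. -/
theorem count_injective_choice_functions_le {α : Type*} [Fintype α] [DecidableEq α]
    (r : ℕ) (hr : 1 ≤ r) (L : Fin r → Finset α) (hL : ∀ j, (L j).card = r + 300)
    (C : Finset α) (hC : ∀ j, Disjoint C (L j)) (i : Fin r) (T : Finset α) :
    (Finset.univ.filter fun f : Fin r → α =>
        Function.Injective f ∧ (∀ j, f j ∈ L j) ∧
        C ∪ Finset.univ.image f = T ∪ {f i}).card ≤
      (r + 300) * (r - 1).factorial := by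
  classical
  set P := (Finset.univ.filter fun f : Fin r → α =>
      Function.Injective f ∧ (∀ j, f j ∈ L j) ∧
      C ∪ Finset.univ.image f = T ∪ {f i}) with hP
  have hcard : P.card = ∑ a ∈ L i, (P.filter fun f => f i = a).card := by
    apply Finset.card_eq_sum_card_fiberwise
    intro f hf
    simp only [hP, Finset.mem_coe, Finset.mem_filter] at hf
    exact hf.2.2.1 i
  rw [hcard]
  have hbound : ∀ a ∈ L i, (P.filter fun f => f i = a).card ≤ (r - 1).factorial := by
    intro a _
    by_cases hne : (P.filter fun f => f i = a).Nonempty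
    · obtain ⟨f₀, hf₀'⟩ := hne
      set S := (T ∪ {a}) \ C with hS
      have hprops : ∀ f ∈ P.filter (fun f => f i = a),
          Function.Injective f ∧ (∀ j, f j ∈ L j) ∧ f i = a ∧
          Finset.univ.image f = S := by
        intro f hf
        simp only [hP, Finset.mem_filter, Finset.mem_univ, true_and] at hf
        obtain ⟨⟨hinj, hmem, heq⟩, hfi⟩ := hf
        refine ⟨hinj, hmem, hfi, ?_⟩
        have hdisj : Disjoint C (Finset.univ.image f) := by
          rw [Finset.disjoint_right]
          intro x hx
          simp only [Finset.mem_image] at hx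
          obtain ⟨j, _, rfl⟩ := hx
          exact fun hxC => (Finset.disjoint_left.mp (hC j)) hxC (hmem j)
        have h1 : (C ∪ Finset.univ.image f) \ C = Finset.univ.image f :=
          Finset.union_sdiff_cancel_left hdisj
        rw [heq, hfi] at h1
        rw [← h1, hS]
      obtain ⟨hinj₀, hmem₀, hfi₀, him₀⟩ := hprops f₀ hf₀'
      have hScard : S.card = r := by
        rw [← him₀, Finset.card_image_of_injective _ hinj₀, Finset.card_univ,
          Fintype.card_fin]
      have haS : a ∈ S := by
        rw [← him₀, ← hfi₀]
        exact Finset.mem_image_of_mem f₀ (Finset.mem_univ i)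
      have hScard' : (S.erase a).card = r - 1 := by
        rw [Finset.card_erase_of_mem haS, hScard]
      have key : (P.filter fun f => f i = a).card ≤
          Fintype.card ({j : Fin r // j ≠ i} ↪ (S.erase a : Finset α)) := by
        rw [← Fintype.card_coe]
        have hg : ∀ (f : ↥(P.filter fun f => f i = a)) (j : {j : Fin r // j ≠ i}),
            (f : Fin r → α) j.1 ∈ S.erase a := by
          intro f j
          obtain ⟨hinj, hmem, hfi, him⟩ := hprops f.1 f.2
          refine Finset.mem_erase.mpr ⟨?_, ?_⟩
          · intro h
            exact j.2 (hinj (h.trans hfi.symm))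
          · rw [← him]
            exact Finset.mem_image_of_mem _ (Finset.mem_univ j.1)
        refine Fintype.card_le_of_injective (fun f =>
          ⟨fun j => ⟨(f : Fin r → α) j.1, hg f j⟩, ?_⟩) ?_
        · intro j k hjk
          obtain ⟨hinj, _, _, _⟩ := hprops f.1 f.2
          exact Subtype.ext (hinj (congrArg Subtype.val hjk))
        · intro f g hfg
          obtain ⟨_, _, hfi_f, _⟩ := hprops f.1 f.2
          obtain ⟨_, _, hfi_g, _⟩ := hprops g.1 g.2
          apply Subtype.ext
          funext j
          by_cases hj : j = i
          · rw [hj, hfi_f, hfi_g]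
          · have := congrArg (fun e => ((e : {j : Fin r // j ≠ i} ↪ (S.erase a : Finset α)) ⟨j, hj⟩ : α)) hfg
            exact this
      calc (P.filter fun f => f i = a).card
          ≤ Fintype.card ({j : Fin r // j ≠ i} ↪ (S.erase a : Finset α)) := key
        _ = (r - 1).factorial := by
            rw [Fintype.card_embedding_eq, Fintype.card_coe, hScard']
            have : Fintype.card {j : Fin r // j ≠ i} = r - 1 := by
              simp [Fintype.card_subtype_compl, Fintype.card_fin]
            rw [this, Nat.descFactorial_self]
    · rw [Finset.not_nonempty_iff_eq_empty] at hne
      simp [hne]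
  calc ∑ a ∈ L i, (P.filter fun f => f i = a).card
      ≤ (L i).card * (r - 1).factorial := Finset.sum_le_card_nsmul _ _ _ hbound
    _ = (r + 300) * (r - 1).factorial := by rw [hL i]
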